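/- For all real α > 0 and ρ > 0, the Slater function admits the Laplace transform representation e^{−2√(αρ)} = (√α/√π) ∫₀^∞ τ^{−3/2} e^{−α/τ − ρτ} dτ. -/

import Mathlib

open MeasureTheory Real
open Set

lemma aux_integrable (c : ℝ) (hc : 0 < c) :
    IntegrableOn (fun x => Real.exp (-(x - c/x)^2)) (Ioi 0) := by
  have h1 : Integrable (fun x : ℝ => Real.exp (2*c) * Real.exp (-1 * x^2)) :=
    (integrable_exp_neg_mul_sq one_pos).const_mul _
  refine (h1.integrableOn).mono' ?_ ?_
  · refine (ContinuousOn.aestronglyMeasurable ?_ measurableSet_Ioi)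
    apply ContinuousOn.rexp
    apply ContinuousOn.neg
    apply ContinuousOn.pow
    exact continuousOn_id.sub (continuousOn_const.div continuousOn_id (fun x hx => ne_of_gt hx))
  · filter_upwards [ae_restrict_mem measurableSet_Ioi] with x hx
    rw [Real.norm_eq_abs, abs_of_pos (Real.exp_pos _), ← Real.exp_add]
    apply Real.exp_le_exp.2
    have hx0 : x ≠ 0 := ne_of_gt hx
    have : (x - c/x)^2 = x^2 - 2*c + (c/x)^2 := by field_simp; ring
    nlinarith [sq_nonneg (c/x)]

lemma glasser (c : ℝ) (hc : 0 < c) :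
    ∫ x in Ioi (0:ℝ), Real.exp (-(x - c/x)^2) = Real.sqrt π / 2 := by
  set f : ℝ → ℝ := fun x => x - c/x with hf
  -- derivative
  have hderiv : ∀ x ∈ Ioi (0:ℝ), HasDerivWithinAt f (1 + c/x^2) (Ioi 0) x := by
    intro x hx
    have hx0 : x ≠ 0 := ne_of_gt hx
    have h1 : HasDerivAt (fun y : ℝ => c / y) ((0 * x - c * 1) / x ^ 2) x :=
      (hasDerivAt_const x c).div (hasDerivAt_id x) hx0
    have h2 : HasDerivAt f (1 - (0 * x - c * 1) / x ^ 2) x := (hasDerivAt_id x).sub h1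
    have : (1 : ℝ) - (0 * x - c * 1) / x ^ 2 = 1 + c/x^2 := by field_simp; ring
    rw [this] at h2
    exact h2.hasDerivWithinAt
  -- injectivity
  have hinj : InjOn f (Ioi 0) := by
    intro a ha b hb h
    simp only [hf] at h
    have ha0 : a ≠ 0 := ne_of_gt (mem_Ioi.1 ha)
    have hb0 : b ≠ 0 := ne_of_gt (mem_Ioi.1 hb)
    have key : (a - b) * (a * b + c) = 0 := by
      field_simp at h
      nlinarith [h]
    have hpos : a * b + c > 0 := by
      have := mem_Ioi.1 ha; have := mem_Ioi.1 hb; positivity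
    have := mul_eq_zero.1 key
    rcases this with h' | h'
    · linarith
    · linarith
  -- image is univ
  have himg : f '' Ioi 0 = univ := by
    apply eq_univ_of_forall
    intro u
    set s := Real.sqrt (u^2 + 4*c) with hs
    have hs2 : s^2 = u^2 + 4*c := Real.sq_sqrt (by positivity)
    have hsu : |u| < s := by
      rw [← Real.sqrt_sq_eq_abs]
      exact Real.sqrt_lt_sqrt (sq_nonneg u) (by linarith)
    have hx : (0:ℝ) < (u + s)/2 := by
      have := neg_abs_le u
      linarith [abs_nonneg u]
    refine ⟨(u + s)/2, mem_Ioi.2 hx, ?_⟩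
    simp only [hf]
    have hcd : c / ((u+s)/2) = (u+s)/2 - u := by
      rw [div_eq_iff (ne_of_gt hx)]
      nlinarith [hs2]
    rw [hcd]; ring
  -- integrability of e
  have hint : IntegrableOn (fun x => Real.exp (-(x - c/x)^2)) (Ioi 0) := aux_integrable c hc
  -- h2-substitution data
  have hderiv2 : ∀ x ∈ Ioi (0:ℝ), HasDerivWithinAt (fun y : ℝ => c / y)
      ((0 * x - c * 1) / x ^ 2) (Ioi 0) x := fun x hx =>
    ((hasDerivAt_const x c).div (hasDerivAt_id x) (ne_of_gt hx)).hasDerivWithinAt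
  have hinj2 : InjOn (fun y : ℝ => c / y) (Ioi 0) := by
    intro a ha b hb h
    have ha0 : a ≠ 0 := ne_of_gt (mem_Ioi.1 ha)
    have hb0 : b ≠ 0 := ne_of_gt (mem_Ioi.1 hb)
    field_simp at h
    exact h.symm
  have himg2 : (fun y : ℝ => c / y) '' Ioi 0 = Ioi 0 := by
    ext y
    constructor
    · rintro ⟨x, hx, rfl⟩
      exact mem_Ioi.2 (div_pos hc (mem_Ioi.1 hx))
    · intro hy
      exact ⟨c / y, mem_Ioi.2 (div_pos hc (mem_Ioi.1 hy)), by
        field_simp⟩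
  have hpt : EqOn (fun x => |(0 * x - c * 1) / x ^ 2| • Real.exp (-(c/x - c/(c/x))^2))
      (fun x => c/x^2 * Real.exp (-(x - c/x)^2)) (Ioi 0) := by
    intro x hx
    have hx0 : (0:ℝ) < x := mem_Ioi.1 hx
    have h1 : (0 * x - c * 1) / x ^ 2 = -(c/x^2) := by ring
    have h2 : c / (c/x) = x := by field_simp
    simp only [smul_eq_mul]
    rw [h1, abs_neg, abs_of_pos (by positivity : (0:ℝ) < c / x^2), h2]
    have h3 : (c/x - x)^2 = (x - c/x)^2 := by ring
    rw [h3]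
  -- integrability of (c/x^2) * e
  have hint2 : IntegrableOn (fun x => c/x^2 * Real.exp (-(x - c/x)^2)) (Ioi 0) := by
    have := (integrableOn_image_iff_integrableOn_abs_deriv_smul measurableSet_Ioi hderiv2 hinj2
      (fun y => Real.exp (-(y - c/y)^2))).1 (by rw [himg2]; exact hint)
    exact this.congr_fun hpt measurableSet_Ioi
  -- A : total integral is √π
  have hA : ∫ x in Ioi (0:ℝ), (1 + c/x^2) * Real.exp (-(f x)^2) = Real.sqrt π := by
    have key := integral_image_eq_integral_abs_deriv_smul measurableSet_Ioi hderiv hinj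
      (fun u => Real.exp (-u^2))
    rw [himg] at key
    have hg : ∫ u in (univ : Set ℝ), Real.exp (-u^2) = Real.sqrt π := by
      rw [setIntegral_univ]
      simpa using integral_gaussian 1
    calc ∫ x in Ioi (0:ℝ), (1 + c/x^2) * Real.exp (-(f x)^2)
        = ∫ x in Ioi (0:ℝ), |1 + c/x^2| • Real.exp (-(f x)^2) := by
          refine setIntegral_congr_fun measurableSet_Ioi fun x hx => ?_
          have hx0 : (0:ℝ) < x := mem_Ioi.1 hx
          rw [smul_eq_mul, abs_of_pos (by positivity)]
      _ = ∫ u in (univ : Set ℝ), Real.exp (-u^2) := key.symm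
      _ = Real.sqrt π := hg
  -- B : symmetry
  have hB : ∫ x in Ioi (0:ℝ), c/x^2 * Real.exp (-(x - c/x)^2)
      = ∫ x in Ioi (0:ℝ), Real.exp (-(x - c/x)^2) := by
    have key := integral_image_eq_integral_abs_deriv_smul measurableSet_Ioi hderiv2 hinj2
      (fun y => Real.exp (-(y - c/y)^2))
    rw [himg2] at key
    rw [key]
    exact (setIntegral_congr_fun measurableSet_Ioi hpt).symm
  -- split
  have hsplit : ∫ x in Ioi (0:ℝ), (1 + c/x^2) * Real.exp (-(f x)^2)
      = (∫ x in Ioi (0:ℝ), Real.exp (-(x - c/x)^2))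
        + ∫ x in Ioi (0:ℝ), c/x^2 * Real.exp (-(x - c/x)^2) := by
    rw [← integral_add hint hint2]
    refine setIntegral_congr_fun measurableSet_Ioi fun x hx => ?_
    simp only [hf]
    ring
  rw [hsplit, hB] at hA
  linarith

/-- **Laplace transform representation of the Slater function** (formula (4.12),
Khoromskaia–Khoromskij): for `α > 0` and `ρ > 0`,
`e^{−2√(αρ)} = (√α/√π) ∫₀^∞ τ^{−3/2} e^{−α/τ − ρτ} dτ`. -/
theorem slater_function_laplace_transform (α ρ : ℝ) (hα : 0 < α) (hρ : 0 < ρ) :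
    Real.exp (-(2 * Real.sqrt (α * ρ))) =
      (Real.sqrt α / Real.sqrt π) *
        ∫ τ in Set.Ioi (0 : ℝ), τ ^ (-(3 : ℝ) / 2) * Real.exp (-(α / τ) - ρ * τ) := by
  set c := Real.sqrt (α * ρ) with hcdef
  have hc : 0 < c := Real.sqrt_pos.2 (by positivity)
  have hc2 : c^2 = α * ρ := Real.sq_sqrt (by positivity)
  have hsa : (0:ℝ) < Real.sqrt α := Real.sqrt_pos.2 hα
  have hsp : (0:ℝ) < Real.sqrt π := Real.sqrt_pos.2 Real.pi_pos
  set F : ℝ → ℝ := fun τ => τ ^ (-(3:ℝ)/2) * Real.exp (-(α / τ) - ρ * τ) with hF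
  have hderiv : ∀ s ∈ Ioi (0:ℝ), HasDerivWithinAt (fun s : ℝ => α / s^2)
      ((0 * s^2 - α * (↑2 * s^1)) / (s^2)^2) (Ioi 0) s := by
    intro s hs
    have hs0 : (0:ℝ) < s := mem_Ioi.1 hs
    exact ((hasDerivAt_const s α).div (hasDerivAt_pow 2 s)
      (pow_ne_zero 2 (ne_of_gt hs0))).hasDerivWithinAt
  have hinj : InjOn (fun s : ℝ => α / s^2) (Ioi 0) := by
    intro a ha b hb h
    have ha0 : (0:ℝ) < a := mem_Ioi.1 ha
    have hb0 : (0:ℝ) < b := mem_Ioi.1 hb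
    simp only at h
    field_simp at h
    nlinarith [h]
  have himg : (fun s : ℝ => α / s^2) '' Ioi 0 = Ioi 0 := by
    ext t
    constructor
    · rintro ⟨s, hs, rfl⟩
      exact mem_Ioi.2 (div_pos hα (pow_pos (mem_Ioi.1 hs) 2))
    · intro ht
      have ht0 : (0:ℝ) < t := mem_Ioi.1 ht
      refine ⟨Real.sqrt (α/t), mem_Ioi.2 (Real.sqrt_pos.2 (by positivity)), ?_⟩
      simp only
      rw [Real.sq_sqrt (by positivity : (0:ℝ) ≤ α/t)]
      field_simp
  have key := integral_image_eq_integral_abs_deriv_smul measurableSet_Ioi hderiv hinj F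
  rw [himg] at key
  have hpt : EqOn (fun s => |(0 * s^2 - α * (↑2 * s^1)) / (s^2)^2| • F (α/s^2))
      (fun s => (2 * Real.exp (-(2*c)) / Real.sqrt α) * Real.exp (-(s - c/s)^2)) (Ioi 0) := by
    intro s hs
    have hs0 : (0:ℝ) < s := mem_Ioi.1 hs
    have ht : (0:ℝ) < α/s^2 := by positivity
    have h1 : (0 * s^2 - α * (↑2 * s^1)) / (s^2)^2 = -(2*α/s^3) := by
      field_simp
      ring
    have hrpow : (α/s^2) ^ (-(3:ℝ)/2) = s^3/(α * Real.sqrt α) := by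
      rw [show (-(3:ℝ)/2) = -((3:ℝ)/2) by norm_num, Real.rpow_neg ht.le,
        show ((3:ℝ)/2) = 1 + 1/2 by norm_num, Real.rpow_add ht, Real.rpow_one,
        ← Real.sqrt_eq_rpow]
      have hsq : Real.sqrt (α/s^2) = Real.sqrt α / s := by
        rw [Real.sqrt_div hα.le, Real.sqrt_sq hs0.le]
      rw [hsq]
      field_simp
    have harg : -(α / (α / s ^ 2)) - ρ * (α / s ^ 2) = -(s - c/s)^2 + -(2*c) := by
      field_simp
      nlinarith [hc2]
    simp only [hF, smul_eq_mul]
    rw [h1, abs_neg, abs_of_pos (by positivity : (0:ℝ) < 2*α/s^3), hrpow, harg,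
      Real.exp_add]
    field_simp
  rw [setIntegral_congr_fun measurableSet_Ioi hpt] at key
  rw [MeasureTheory.integral_const_mul, glasser c hc] at key
  rw [hF] at key
  rw [key]
  rw [div_mul_eq_mul_div, div_mul_eq_mul_div]
  field_simp
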